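/- Let h : ℝ₊ → ℝ be a twice differentiable nonvanishing function with nonvanishing first derivative satisfying (h''·h)/(h')² + h/(x·h') = 1 for all x > 0 (the case σ = 1, ζ = 1 of equation (5.5)). Then there exist a nonzero constant γ and a nonzero constant α such that h(x) = γ x^{α} for all x > 0. -/

import Mathlib

open Real

lemma const_on_Ioi (f : ℝ → ℝ)
    (hd : ∀ x ∈ Set.Ioi (0:ℝ), DifferentiableAt ℝ f x)
    (hz : ∀ x ∈ Set.Ioi (0:ℝ), deriv f x = 0)
    {x y : ℝ} (hx : x ∈ Set.Ioi (0:ℝ)) (hy : y ∈ Set.Ioi (0:ℝ)) : f x = f y := by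
  apply (convex_Ioi (0:ℝ)).is_const_of_fderivWithin_eq_zero
    (fun z hz => (hd z hz).differentiableWithinAt) _ hx hy
  intro z hzm
  rw [fderivWithin_of_isOpen isOpen_Ioi hzm]
  ext
  simp [← toSpanSingleton_deriv, hz z hzm]


/-- Equation (5.5) with `σ = 1`, `ζ = 1`: a twice differentiable nonvanishing
function `h` on `ℝ₊` with nonvanishing first derivative satisfying
`(h'' h)/(h')² + h/(x h') = 1` for all `x > 0` is of the form
`h(x) = γ x^α` with nonzero constants `γ, α`. -/
theorem stmt_15 (h : ℝ → ℝ)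
    (hd1 : ∀ x > (0 : ℝ), DifferentiableAt ℝ h x)
    (hd2 : ∀ x > (0 : ℝ), DifferentiableAt ℝ (deriv h) x)
    (hne : ∀ x > (0 : ℝ), h x ≠ 0)
    (hde : ∀ x > (0 : ℝ), deriv h x ≠ 0)
    (heq : ∀ x > (0 : ℝ),
      deriv (deriv h) x * h x / (deriv h x) ^ 2 + h x / (x * deriv h x) = 1) :
    ∃ γ : ℝ, γ ≠ 0 ∧ ∃ α : ℝ, α ≠ 0 ∧ ∀ x > (0 : ℝ), h x = γ * x ^ α := by
  set φ : ℝ → ℝ := fun x => x * deriv h x / h x with hφ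
  -- key algebraic identity
  have key : ∀ x > (0:ℝ), (deriv h x + x * deriv (deriv h) x) * h x = x * deriv h x * deriv h x := by
    intro x hx
    have e := heq x hx
    have h1 := hne x hx
    have h2 := hde x hx
    field_simp at e
    have e2 : ((deriv h x + x * deriv (deriv h) x) * h x) * deriv h x
        = (x * deriv h x * deriv h x) * deriv h x := by linear_combination deriv h x * e
    exact mul_right_cancel₀ h2 e2
  have hφd : ∀ x ∈ Set.Ioi (0:ℝ), DifferentiableAt ℝ φ x := by
    intro x hx
    exact (((differentiableAt_fun_id).mul (hd2 x hx)).div (hd1 x hx) (hne x hx))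
  have hφz : ∀ x ∈ Set.Ioi (0:ℝ), deriv φ x = 0 := by
    intro x hx
    have h1 := hne x hx
    have hnum : DifferentiableAt ℝ (fun y => y * deriv h y) x :=
      (differentiableAt_fun_id).mul (hd2 x hx)
    rw [hφ]
    rw [deriv_fun_div hnum (hd1 x hx) h1]
    rw [deriv_fun_mul differentiableAt_fun_id (hd2 x hx), deriv_id'']
    have k := key x hx
    field_simp
    ring_nf
    ring_nf at k
    linarith [k]
  set α : ℝ := deriv h 1 / h 1 with hα
  have hα1 : φ 1 = α := by simp [hφ, hα]
  have hαne : α ≠ 0 := div_ne_zero (hde 1 one_pos) (hne 1 one_pos)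
  have hφconst : ∀ x > (0:ℝ), deriv h x * x = α * h x := by
    intro x hx
    have := const_on_Ioi φ hφd hφz (Set.mem_Ioi.2 hx) (Set.mem_Ioi.2 one_pos)
    rw [hα1] at this
    have h1 := hne x hx
    rw [hφ] at this
    field_simp at this
    linarith [this]
  -- second step
  set ψ : ℝ → ℝ := fun x => h x * x ^ (-α) with hψ
  have hrd : ∀ x ∈ Set.Ioi (0:ℝ), HasDerivAt (fun y : ℝ => y ^ (-α)) (-α * x ^ (-α - 1)) x := by
    intro x hx
    exact Real.hasDerivAt_rpow_const (Or.inl (ne_of_gt hx))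
  have hψd : ∀ x ∈ Set.Ioi (0:ℝ), DifferentiableAt ℝ ψ x := by
    intro x hx
    exact (hd1 x hx).mul (hrd x hx).differentiableAt
  have hψz : ∀ x ∈ Set.Ioi (0:ℝ), deriv ψ x = 0 := by
    intro x hx
    have hx0 : (0:ℝ) < x := hx
    rw [hψ, deriv_fun_mul (hd1 x hx) (hrd x hx).differentiableAt, (hrd x hx).deriv]
    have e1 : x ^ (-α - 1) = x ^ (-α) / x := by
      rw [Real.rpow_sub hx0, Real.rpow_one]
    have e2 := hφconst x hx0
    have hd' : deriv h x = α * h x / x := by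
      rw [eq_div_iff (ne_of_gt hx0)]; linarith [e2]
    rw [e1, hd']
    field_simp
    ring
  have hconst : ∀ x > (0:ℝ), ψ x = h 1 := by
    intro x hx
    have := const_on_Ioi ψ hψd hψz (Set.mem_Ioi.2 hx) (Set.mem_Ioi.2 one_pos)
    simpa [hψ, Real.one_rpow] using this
  refine ⟨h 1, hne 1 one_pos, α, hαne, fun x hx => ?_⟩
  have := hconst x hx
  rw [hψ] at this
  have hxp : (0:ℝ) < x ^ (-α) := Real.rpow_pos_of_pos hx (-α)
  have : h x = h 1 / x ^ (-α) := by
    field_simp at this ⊢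
    linarith [this]
  rw [this, Real.rpow_neg (le_of_lt hx)]
  field_simp
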